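/- In ℝ³ there exists a finite partition into sets U₁,...,U_K such that any two vectors u, v in the same set satisfy ‖u - v‖ ≤ max(‖u‖, ‖v‖): namely, cones over a triangulation of the sphere into spherical triangles of diameter at most π/3. -/

import Mathlib

open RealInnerProductSpace

set_option maxHeartbeats 1000000 in
lemma key_inner (d u v : EuclideanSpace ℝ (Fin 3)) (hd : ‖d‖ = 1)
    (hu : Real.sqrt 3 / 2 * ‖u‖ ≤ ⟪d, u⟫) (hv : Real.sqrt 3 / 2 * ‖v‖ ≤ ⟪d, v⟫) :
    ⟪u, v⟫ ≥ ‖u‖ * ‖v‖ / 2 := by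
  set a := ⟪d, u⟫ with ha
  set b := ⟪d, v⟫ with hb
  have hs3 : (0:ℝ) ≤ Real.sqrt 3 := Real.sqrt_nonneg 3
  have hs3sq : Real.sqrt 3 ^ 2 = 3 := Real.sq_sqrt (by norm_num)
  have hun : (0:ℝ) ≤ ‖u‖ := norm_nonneg u
  have hvn : (0:ℝ) ≤ ‖v‖ := norm_nonneg v
  have ha0 : 0 ≤ a := le_trans (by positivity) hu
  have hb0 : 0 ≤ b := le_trans (by positivity) hv
  have hdd : ⟪d, d⟫ = 1 := by
    rw [real_inner_self_eq_norm_sq, hd]; norm_num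
  set u' := u - a • d with hu'
  set v' := v - b • d with hv'
  have hip : ⟪u', v'⟫ = ⟪u, v⟫ - a * b := by
    simp only [hu', hv', inner_sub_left, inner_sub_right, inner_smul_left, inner_smul_right,
      RCLike.ofReal_real_eq_id, id_eq, hdd]
    rw [real_inner_comm d u, ← ha, ← hb]
    ring
  have hnu' : ‖u'‖ ^ 2 = ‖u‖ ^ 2 - a ^ 2 := by
    rw [← real_inner_self_eq_norm_sq, ← real_inner_self_eq_norm_sq]
    simp only [hu', inner_sub_left, inner_sub_right, inner_smul_left, inner_smul_right,
      RCLike.ofReal_real_eq_id, id_eq, hdd]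
    rw [real_inner_comm d u, ← ha]
    ring
  have hnv' : ‖v'‖ ^ 2 = ‖v‖ ^ 2 - b ^ 2 := by
    rw [← real_inner_self_eq_norm_sq, ← real_inner_self_eq_norm_sq]
    simp only [hv', inner_sub_left, inner_sub_right, inner_smul_left, inner_smul_right,
      RCLike.ofReal_real_eq_id, id_eq, hdd]
    rw [real_inner_comm d v, ← hb]
    ring
  have hcs : |⟪u', v'⟫| ≤ ‖u'‖ * ‖v'‖ := abs_real_inner_le_norm u' v'
  have hasq : 3 / 4 * ‖u‖ ^ 2 ≤ a ^ 2 := by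
    nlinarith [mul_le_mul_of_nonneg_left hu (by positivity : (0:ℝ) ≤ Real.sqrt 3 / 2 * ‖u‖)]
  have hbsq : 3 / 4 * ‖v‖ ^ 2 ≤ b ^ 2 := by
    nlinarith [mul_le_mul_of_nonneg_left hv (by positivity : (0:ℝ) ≤ Real.sqrt 3 / 2 * ‖v‖)]
  have hu'le : ‖u'‖ ≤ ‖u‖ / 2 := by
    nlinarith [norm_nonneg u', sq_nonneg (‖u'‖ - ‖u‖ / 2), sq_nonneg (‖u'‖ + ‖u‖ / 2)]
  have hv'le : ‖v'‖ ≤ ‖v‖ / 2 := by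
    nlinarith [norm_nonneg v', sq_nonneg (‖v'‖ - ‖v‖ / 2), sq_nonneg (‖v'‖ + ‖v‖ / 2)]
  have hab : 3 / 4 * (‖u‖ * ‖v‖) ≤ a * b := by
    have hmm := mul_le_mul hu hv (by positivity) ha0
    have h33 : Real.sqrt 3 * Real.sqrt 3 = 3 := Real.mul_self_sqrt (by norm_num)
    have heq3 : Real.sqrt 3 / 2 * ‖u‖ * (Real.sqrt 3 / 2 * ‖v‖)
        = Real.sqrt 3 * Real.sqrt 3 * (‖u‖ * ‖v‖) / 4 := by ring
    rw [heq3, h33] at hmm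
    linarith
  have hprod : ‖u'‖ * ‖v'‖ ≤ ‖u‖ / 2 * (‖v‖ / 2) :=
    mul_le_mul hu'le hv'le (norm_nonneg v') (by positivity)
  have h1 : ⟪u, v⟫ ≥ a * b - ‖u'‖ * ‖v'‖ := by
    have := (abs_le.mp hcs).1
    linarith [hip ▸ this]
  have heq : ‖u‖ / 2 * (‖v‖ / 2) = ‖u‖ * ‖v‖ / 4 := by ring
  linarith

theorem stmt15 :
    ∃ (K : ℕ) (U : Fin K → Set (EuclideanSpace ℝ (Fin 3))),
      (⋃ i, U i) = Set.univ ∧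
      (∀ i, ∀ x ∈ U i, ∀ r : ℝ, 0 ≤ r → r • x ∈ U i) ∧
      (∀ i, ∀ u ∈ U i, ∀ v ∈ U i, u ≠ 0 → v ≠ 0 → ⟪u, v⟫ ≥ ‖u‖ * ‖v‖ / 2) ∧
      ∀ i, ∀ u ∈ U i, ∀ v ∈ U i, ‖u - v‖ ≤ max ‖u‖ ‖v‖ := by
  classical
  set E := EuclideanSpace ℝ (Fin 3)
  set S : Set E := Metric.sphere (0:E) 1 with hS
  have hScomp : IsCompact S := isCompact_sphere 0 1
  have hs3lt1 : Real.sqrt 3 / 2 < 1 := by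
    nlinarith [Real.sq_sqrt (by norm_num : (3:ℝ) ≥ 0), Real.sqrt_nonneg 3]
  set V : S → Set E := fun d => {y : E | Real.sqrt 3 / 2 < ⟪(d:E), y⟫} with hV
  have hVopen : ∀ d : S, IsOpen (V d) := fun d =>
    isOpen_lt continuous_const (continuous_const.inner continuous_id)
  have hcov : S ⊆ ⋃ d : S, V d := by
    intro y hy
    refine Set.mem_iUnion.2 ⟨⟨y, hy⟩, ?_⟩
    have hyn : ‖y‖ = 1 := by simpa [hS] using hy
    have : ⟪y, y⟫ = 1 := by rw [real_inner_self_eq_norm_sq, hyn]; norm_num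
    simpa [hV, this, hyn] using hs3lt1
  obtain ⟨t, ht⟩ := hScomp.elim_finite_subcover V hVopen hcov
  -- t is nonempty since S is nonempty
  have hp : (EuclideanSpace.single 0 (1:ℝ) : E) ∈ S := by
    simp [hS, EuclideanSpace.norm_single]
  have htne : t.Nonempty := by
    rcases Set.mem_iUnion₂.mp (ht hp) with ⟨d, hd, _⟩
    exact ⟨d, hd⟩
  set e := t.equivFin with he
  refine ⟨t.card, fun i => {v : E | Real.sqrt 3 / 2 * ‖v‖ ≤ ⟪((e.symm i : t) : E), v⟫}, ?_, ?_, ?_, ?_⟩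
  · -- union = univ
    apply Set.eq_univ_of_forall
    intro v
    by_cases hv : v = 0
    · obtain ⟨d, hd⟩ := htne
      refine Set.mem_iUnion.2 ⟨e ⟨d, hd⟩, ?_⟩
      simp [hv]
      show Real.sqrt 3 / 2 * ‖(0:E)‖ ≤ ⟪((d:S):E), (0:E)⟫
      simp
    · have hvn : ‖v‖ ≠ 0 := norm_ne_zero_iff.mpr hv
      have hw : (‖v‖⁻¹ • v) ∈ S := by
        simp [hS, norm_smul, abs_of_nonneg (inv_nonneg.mpr (norm_nonneg v)),
          inv_mul_cancel₀ hvn]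
      rcases Set.mem_iUnion₂.mp (ht hw) with ⟨d, hd, hdw⟩
      refine Set.mem_iUnion.2 ⟨e ⟨d, hd⟩, ?_⟩
      simp only [Equiv.symm_apply_apply, Set.mem_setOf_eq]
      have hdw' : Real.sqrt 3 / 2 < ⟪(d:E), ‖v‖⁻¹ • v⟫ := hdw
      rw [real_inner_smul_right] at hdw'
      have hvpos : (0:ℝ) < ‖v‖ := lt_of_le_of_ne (norm_nonneg v) (Ne.symm hvn)
      have := mul_le_mul_of_nonneg_left hdw'.le hvpos.le
      calc Real.sqrt 3 / 2 * ‖v‖ ≤ ‖v‖ * (‖v‖⁻¹ * ⟪(d:E), v⟫) := by linarith [this]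
        _ = ⟪(d:E), v⟫ := by field_simp
  · -- cone property
    intro i x hx r hr
    simp only [Set.mem_setOf_eq] at hx ⊢
    change Real.sqrt 3 / 2 * ‖x‖ ≤ ⟪((e.symm i : t) : E), x⟫ at hx
    show Real.sqrt 3 / 2 * ‖r • x‖ ≤ ⟪((e.symm i : t) : E), r • x⟫
    rw [real_inner_smul_right, norm_smul, Real.norm_of_nonneg hr]
    calc Real.sqrt 3 / 2 * (r * ‖x‖) = r * (Real.sqrt 3 / 2 * ‖x‖) := by ring
      _ ≤ r * ⟪((e.symm i : t) : E), x⟫ := mul_le_mul_of_nonneg_left hx hr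
  · -- inner product bound
    intro i u hu v hv _ _
    have hd1 : ‖((e.symm i : t) : E)‖ = 1 := by
      have := (e.symm i : t).property
      simpa [hS] using this
    exact key_inner _ u v hd1 hu hv
  · -- norm bound
    intro i u hu v hv
    have hd1 : ‖((e.symm i : t) : E)‖ = 1 := by
      have := (e.symm i : t).property
      simpa [hS] using this
    have hinner : ⟪u, v⟫ ≥ ‖u‖ * ‖v‖ / 2 := key_inner _ u v hd1 hu hv
    have hsq : ‖u - v‖ ^ 2 = ‖u‖ ^ 2 - 2 * ⟪u, v⟫ + ‖v‖ ^ 2 := norm_sub_sq_real u v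
    have hM : ‖u - v‖ ^ 2 ≤ (max ‖u‖ ‖v‖) ^ 2 := by
      rcases max_cases ‖u‖ ‖v‖ with ⟨hm, hle⟩ | ⟨hm, hle⟩ <;> rw [hm] <;>
        nlinarith [norm_nonneg u, norm_nonneg v]
    nlinarith [norm_nonneg (u - v), le_max_left ‖u‖ ‖v‖, norm_nonneg u,
      sq_nonneg (‖u - v‖ - max ‖u‖ ‖v‖), sq_nonneg (‖u - v‖ + max ‖u‖ ‖v‖)]
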